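/- Let M > 0 and let f : ℝ × ℝ^{d−1} → ℝ satisfy |f(t, x′) − f(s, y′)| ≤ M · max(√|t − s|, |x′ − y′|) for all (t, x′), (s, y′). Define Ω = {(t, x′, x^d) ∈ ℝ^{d+1} : x^d > f(t, x′)}. Then there exists a constant N = N(M) ≥ 1 such that for every X ∈ Ω, the parabolic distance from X to the topological boundary ∂Ω satisfies d(X) ≤ d⁻(X) ≤ N·d(X) and d(X) ≤ d⁺(X) ≤ N·d(X), where d(X) = inf{|Z − X|_P : Z ∈ ∂Ω}, d⁻(X) = inf{|Z − X|_P : Z = (s,z) ∈ ∂Ω, s ≤ t}, and d⁺(X) = inf{|Z − X|_P : Z = (s,z) ∈ ∂Ω, s ≥ t}. -/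

import Mathlib

noncomputable section

/-- The parabolic distance on `ℝ × ℝ^{d-1} × ℝ`, with Euclidean spatial norm. -/
def distP11 (dm1 : ℕ) (X Y : ℝ × EuclideanSpace ℝ (Fin dm1) × ℝ) : ℝ :=
  max (Real.sqrt |X.1 - Y.1|)
    (Real.sqrt (‖X.2.1 - Y.2.1‖ ^ 2 + (X.2.2 - Y.2.2) ^ 2))

/-- `d(X)`: parabolic distance to the topological boundary of `Ω`. -/
def dFull (dm1 : ℕ) (Ω : Set (ℝ × EuclideanSpace ℝ (Fin dm1) × ℝ))
    (X : ℝ × EuclideanSpace ℝ (Fin dm1) × ℝ) : ℝ :=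
  sInf {r : ℝ | ∃ Z ∈ frontier Ω, r = distP11 dm1 Z X}

/-- `d⁻(X)`: parabolic distance to boundary points with `s ≤ t`. -/
def dMinus (dm1 : ℕ) (Ω : Set (ℝ × EuclideanSpace ℝ (Fin dm1) × ℝ))
    (X : ℝ × EuclideanSpace ℝ (Fin dm1) × ℝ) : ℝ :=
  sInf {r : ℝ | ∃ Z ∈ frontier Ω, Z.1 ≤ X.1 ∧ r = distP11 dm1 Z X}

/-- `d⁺(X)`: parabolic distance to boundary points with `s ≥ t`. -/
def dPlus (dm1 : ℕ) (Ω : Set (ℝ × EuclideanSpace ℝ (Fin dm1) × ℝ))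
    (X : ℝ × EuclideanSpace ℝ (Fin dm1) × ℝ) : ℝ :=
  sInf {r : ℝ | ∃ Z ∈ frontier Ω, X.1 ≤ Z.1 ∧ r = distP11 dm1 Z X}

lemma distP11_nonneg (dm1 : ℕ) (X Y : ℝ × EuclideanSpace ℝ (Fin dm1) × ℝ) :
    0 ≤ distP11 dm1 X Y :=
  le_trans (Real.sqrt_nonneg _) (le_max_left _ _)

/-- `f` with the parabolic Hölder bound is continuous. -/
lemma holder_continuous (dm1 : ℕ) (M : ℝ) (hM : 0 < M)
    (f : ℝ × EuclideanSpace ℝ (Fin dm1) → ℝ)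
    (hf : ∀ p q : ℝ × EuclideanSpace ℝ (Fin dm1),
      |f p - f q| ≤ M * max (Real.sqrt |p.1 - q.1|) ‖p.2 - q.2‖) :
    Continuous f := by
  rw [Metric.continuous_iff]
  intro p ε hε
  refine ⟨min ((ε / (2 * M)) ^ 2) (ε / (2 * M)), by positivity, fun q hq => ?_⟩
  have h1 : dist q p < (ε / (2 * M)) ^ 2 := lt_of_lt_of_le hq (min_le_left _ _)
  have h2 : dist q p < ε / (2 * M) := lt_of_lt_of_le hq (min_le_right _ _)
  have ht : |q.1 - p.1| ≤ dist q p := by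
    rw [Prod.dist_eq, Real.dist_eq] at *
    exact le_max_left _ _
  have hx : ‖q.2 - p.2‖ ≤ dist q p := by
    rw [Prod.dist_eq]
    exact le_trans (le_of_eq (dist_eq_norm q.2 p.2).symm) (le_max_right _ _)
  have hst : Real.sqrt |q.1 - p.1| ≤ ε / (2 * M) := by
    have h0 : |q.1 - p.1| ≤ (ε / (2 * M)) ^ 2 := le_trans ht (le_of_lt h1)
    calc Real.sqrt |q.1 - p.1| ≤ Real.sqrt ((ε / (2 * M)) ^ 2) := Real.sqrt_le_sqrt h0
      _ = ε / (2 * M) := Real.sqrt_sq (by positivity)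
  have hmax : max (Real.sqrt |q.1 - p.1|) ‖q.2 - p.2‖ ≤ ε / (2 * M) :=
    max_le hst (le_trans hx (le_of_lt h2))
  have hb := hf q p
  have : |f q - f p| ≤ M * (ε / (2 * M)) :=
    le_trans hb (mul_le_mul_of_nonneg_left hmax hM.le)
  rw [Real.dist_eq]
  have hMne : M ≠ 0 := ne_of_gt hM
  have : |f q - f p| ≤ ε / 2 := by
    have heq : M * (ε / (2 * M)) = ε / 2 := by field_simp
    linarith [heq ▸ this]
  linarith

/-- For a time-varying `H₁` graph domain `Ω = {x^d > f(t, x′)}` with constant `M`,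
the one-sided parabolic distances to the boundary are comparable to the full
parabolic distance: `d(X) ≤ d⁻(X) ≤ N d(X)` and `d(X) ≤ d⁺(X) ≤ N d(X)`. -/
theorem stmt11 (dm1 : ℕ) (hd : 1 ≤ dm1) (M : ℝ) (hM : 0 < M)
    (f : ℝ × EuclideanSpace ℝ (Fin dm1) → ℝ)
    (hf : ∀ p q : ℝ × EuclideanSpace ℝ (Fin dm1),
      |f p - f q| ≤ M * max (Real.sqrt |p.1 - q.1|) ‖p.2 - q.2‖)
    (Ω : Set (ℝ × EuclideanSpace ℝ (Fin dm1) × ℝ))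
    (hΩ : Ω = {X | f (X.1, X.2.1) < X.2.2}) :
    ∃ N : ℝ, 1 ≤ N ∧ ∀ X ∈ Ω,
      dFull dm1 Ω X ≤ dMinus dm1 Ω X ∧ dMinus dm1 Ω X ≤ N * dFull dm1 Ω X ∧
      dFull dm1 Ω X ≤ dPlus dm1 Ω X ∧ dPlus dm1 Ω X ≤ N * dFull dm1 Ω X := by
  subst hΩ
  set O : Set (ℝ × EuclideanSpace ℝ (Fin dm1) × ℝ) := {X | f (X.1, X.2.1) < X.2.2} with hO
  have hfc : Continuous f := holder_continuous dm1 M hM f hf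
  -- the defining function of the domain
  have hFc : Continuous (fun X : ℝ × EuclideanSpace ℝ (Fin dm1) × ℝ =>
      X.2.2 - f (X.1, X.2.1)) := by
    apply Continuous.sub
    · exact continuous_snd.snd
    · exact hfc.comp (continuous_fst.prodMk (continuous_fst.comp continuous_snd))
  have hopen : IsOpen O := by
    have : O = (fun X : ℝ × EuclideanSpace ℝ (Fin dm1) × ℝ =>
        X.2.2 - f (X.1, X.2.1)) ⁻¹' Set.Ioi 0 := by
      ext X; simp [hO, Set.mem_setOf_eq, sub_pos]
    rw [this]
    exact IsOpen.preimage hFc isOpen_Ioi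
  -- every frontier point lies on the graph of f
  have hsub : ∀ Z ∈ frontier O, Z.2.2 = f (Z.1, Z.2.1) := by
    intro Z hZ
    have hcl : closure O ⊆ {X : ℝ × EuclideanSpace ℝ (Fin dm1) × ℝ |
        f (X.1, X.2.1) ≤ X.2.2} := by
      apply closure_minimal
      · intro X hX; exact le_of_lt (show f (X.1, X.2.1) < X.2.2 from hX)
      · have : {X : ℝ × EuclideanSpace ℝ (Fin dm1) × ℝ | f (X.1, X.2.1) ≤ X.2.2} =
            (fun X : ℝ × EuclideanSpace ℝ (Fin dm1) × ℝ =>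
              X.2.2 - f (X.1, X.2.1)) ⁻¹' Set.Ici 0 := by
          ext X; simp [Set.mem_setOf_eq, sub_nonneg]
        rw [this]
        exact IsClosed.preimage hFc isClosed_Ici
    have h1 : f (Z.1, Z.2.1) ≤ Z.2.2 := hcl hZ.1
    have h2 : Z ∉ O := by
      rw [frontier, hopen.interior_eq] at hZ
      exact hZ.2
    have h3 : ¬ f (Z.1, Z.2.1) < Z.2.2 := h2
    linarith
  -- graph points lie on the frontier
  have hmem : ∀ t : ℝ, ∀ x' : EuclideanSpace ℝ (Fin dm1),
      ((t, x', f (t, x')) : ℝ × EuclideanSpace ℝ (Fin dm1) × ℝ) ∈ frontier O := by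
    intro t x'
    rw [frontier, hopen.interior_eq]
    constructor
    · have hseq : Filter.Tendsto
          (fun n : ℕ => ((t, x', f (t, x') + 1 / (n + 1)) :
            ℝ × EuclideanSpace ℝ (Fin dm1) × ℝ))
          Filter.atTop (nhds (t, x', f (t, x'))) := by
        refine Filter.Tendsto.prodMk_nhds tendsto_const_nhds
          (Filter.Tendsto.prodMk_nhds tendsto_const_nhds ?_)
        have := tendsto_one_div_add_atTop_nhds_zero_nat (𝕜 := ℝ)
        have h := (tendsto_const_nhds :
          Filter.Tendsto (fun _ : ℕ => f (t, x')) Filter.atTop (nhds (f (t, x')))).add this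
        simpa using h
      refine mem_closure_of_tendsto hseq (Filter.Eventually.of_forall fun n => ?_)
      show f (t, x') < f (t, x') + 1 / (n + 1)
      have : (0 : ℝ) < 1 / (n + 1) := by positivity
      linarith
    · intro h
      have : f (t, x') < f (t, x') := h
      exact lt_irrefl _ this
  refine ⟨1 + M, by linarith, fun X hX => ?_⟩
  have hδ : 0 < X.2.2 - f (X.1, X.2.1) := by
    have : f (X.1, X.2.1) < X.2.2 := hX
    linarith
  set δ : ℝ := X.2.2 - f (X.1, X.2.1) with hδdef
  set Z₀ : ℝ × EuclideanSpace ℝ (Fin dm1) × ℝ := (X.1, X.2.1, f (X.1, X.2.1)) with hZ₀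
  have hZ₀front : Z₀ ∈ frontier O := hmem X.1 X.2.1
  have hZ₀dist : distP11 dm1 Z₀ X = δ := by
    simp only [distP11, hZ₀, sub_self, abs_zero, Real.sqrt_zero, norm_zero]
    rw [show (0:ℝ) ^ 2 + (f (X.1, X.2.1) - X.2.2) ^ 2 = δ ^ 2 by rw [hδdef]; ring,
      Real.sqrt_sq hδ.le, max_eq_right hδ.le]
  -- the three sInf sets
  set Sf : Set ℝ := {r : ℝ | ∃ Z ∈ frontier O, r = distP11 dm1 Z X} with hSf
  set Sm : Set ℝ := {r : ℝ | ∃ Z ∈ frontier O, Z.1 ≤ X.1 ∧ r = distP11 dm1 Z X} with hSm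
  set Sp : Set ℝ := {r : ℝ | ∃ Z ∈ frontier O, X.1 ≤ Z.1 ∧ r = distP11 dm1 Z X} with hSp
  have hδm : δ ∈ Sm := ⟨Z₀, hZ₀front, le_refl _, hZ₀dist.symm⟩
  have hδp : δ ∈ Sp := ⟨Z₀, hZ₀front, le_refl _, hZ₀dist.symm⟩
  have hms : Sm ⊆ Sf := fun r ⟨Z, hZ, _, hr⟩ => ⟨Z, hZ, hr⟩
  have hps : Sp ⊆ Sf := fun r ⟨Z, hZ, _, hr⟩ => ⟨Z, hZ, hr⟩
  -- lower bound on all elements of Sf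
  have hlow : ∀ r ∈ Sf, δ / (1 + M) ≤ r := by
    rintro r ⟨Z, hZ, hr⟩
    rw [div_le_iff₀ (by linarith : (0:ℝ) < 1 + M)]
    have hA : Real.sqrt |Z.1 - X.1| ≤ r := hr ▸ le_max_left _ _
    have hBC : Real.sqrt (‖Z.2.1 - X.2.1‖ ^ 2 + (Z.2.2 - X.2.2) ^ 2) ≤ r :=
      hr ▸ le_max_right _ _
    have hB : ‖Z.2.1 - X.2.1‖ ≤ r := by
      calc ‖Z.2.1 - X.2.1‖ = Real.sqrt (‖Z.2.1 - X.2.1‖ ^ 2) :=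
            (Real.sqrt_sq (norm_nonneg _)).symm
        _ ≤ Real.sqrt (‖Z.2.1 - X.2.1‖ ^ 2 + (Z.2.2 - X.2.2) ^ 2) :=
            Real.sqrt_le_sqrt (by nlinarith [sq_nonneg (Z.2.2 - X.2.2)])
        _ ≤ r := hBC
    have hC : |Z.2.2 - X.2.2| ≤ r := by
      calc |Z.2.2 - X.2.2| = Real.sqrt ((Z.2.2 - X.2.2) ^ 2) :=
            (Real.sqrt_sq_eq_abs _).symm
        _ ≤ Real.sqrt (‖Z.2.1 - X.2.1‖ ^ 2 + (Z.2.2 - X.2.2) ^ 2) :=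
            Real.sqrt_le_sqrt (by nlinarith [sq_nonneg ‖Z.2.1 - X.2.1‖])
        _ ≤ r := hBC
    have hZb : Z.2.2 = f (Z.1, Z.2.1) := hsub Z hZ
    have hfb := hf (Z.1, Z.2.1) (X.1, X.2.1)
    dsimp only at hfb
    have hmax : max (Real.sqrt |Z.1 - X.1|) ‖Z.2.1 - X.2.1‖ ≤ r := max_le hA hB
    have hfb2 : |f (Z.1, Z.2.1) - f (X.1, X.2.1)| ≤ M * r :=
      le_trans hfb (mul_le_mul_of_nonneg_left hmax hM.le)
    have h1 := abs_le.mp hC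
    have h2 := abs_le.mp hfb2
    have hδeq : δ = (X.2.2 - Z.2.2) + (f (Z.1, Z.2.1) - f (X.1, X.2.1)) := by
      rw [hδdef, hZb]; ring
    linarith [h1.1, h2.2]
  have hbddf : BddBelow Sf := ⟨δ / (1 + M), hlow⟩
  have hnef : Sf.Nonempty := ⟨δ, hms hδm⟩
  have hlowf : δ / (1 + M) ≤ sInf Sf := le_csInf hnef hlow
  have hdF_eq : dFull dm1 O X = sInf Sf := rfl
  have hdM_eq : dMinus dm1 O X = sInf Sm := rfl
  have hdP_eq : dPlus dm1 O X = sInf Sp := rfl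
  have key : ∀ S : Set ℝ, S ⊆ Sf → δ ∈ S →
      sInf Sf ≤ sInf S ∧ sInf S ≤ (1 + M) * sInf Sf := by
    intro S hS hδS
    have hbdd : BddBelow S := hbddf.mono hS
    constructor
    · exact csInf_le_csInf hbddf ⟨δ, hδS⟩ hS
    · have h1 : sInf S ≤ δ := csInf_le hbdd hδS
      have h2 : δ = (1 + M) * (δ / (1 + M)) := by field_simp
      calc sInf S ≤ δ := h1
        _ = (1 + M) * (δ / (1 + M)) := h2
        _ ≤ (1 + M) * sInf Sf :=
            mul_le_mul_of_nonneg_left hlowf (by linarith)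
  obtain ⟨hm1, hm2⟩ := key Sm hms hδm
  obtain ⟨hp1, hp2⟩ := key Sp hps hδp
  exact ⟨hm1, hm2, hp1, hp2⟩

end
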